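/- Let A be a bounded operator on a Hilbert space H, invertible with bounded everywhere-defined inverse, g ∈ H, and f = A⁻¹g. Then f belongs to the closure of K(A,g) if and only if the Krylov intersection I(A,g) = closure(K(A,g)) ∩ A(K(A,g)^⊥) equals {0}. -/

import Mathlib

/-- If `A` is bounded and boundedly invertible (with inverse `B`), then the solution
`f = A⁻¹ g = B g` belongs to the closure of `K(A,g)` if and only if the Krylov
intersection `I(A,g) = closure(K(A,g)) ∩ A(K(A,g)^⊥)` is trivial. -/
theorem stmt6 {H : Type*} [NormedAddCommGroup H] [InnerProductSpace ℂ H] [CompleteSpace H]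
    (A B : H →L[ℂ] H)
    (hAB : A.comp B = ContinuousLinearMap.id ℂ H)
    (hBA : B.comp A = ContinuousLinearMap.id ℂ H)
    (g : H) :
    B g ∈ closure ((Submodule.span ℂ (Set.range fun k : ℕ => (A ^ k) g)) : Set H)
    ↔ closure ((Submodule.span ℂ (Set.range fun k : ℕ => (A ^ k) g)) : Set H)
        ∩ (A '' ((Submodule.span ℂ (Set.range fun k : ℕ => (A ^ k) g))ᗮ : Set H)) = {0} := by
  classical
  set KS : Submodule ℂ H := Submodule.span ℂ (Set.range fun k : ℕ => (A ^ k) g) with hKS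
  set Kc : Submodule ℂ H := KS.topologicalClosure with hKc
  have hset : closure (KS : Set H) = (Kc : Set H) := (KS.topologicalClosure_coe).symm
  rw [hset]
  have hBA' : ∀ x : H, B (A x) = x := fun x =>
    congrArg (fun T : H →L[ℂ] H => T x) hBA
  have hAB' : ∀ x : H, A (B x) = x := fun x =>
    congrArg (fun T : H →L[ℂ] H => T x) hAB
  have hginKS : g ∈ KS := Submodule.subset_span ⟨0, by simp⟩
  -- A maps KS into KS
  have hAK : ∀ x ∈ KS, A x ∈ KS := by
    intro x hx
    have : KS.map (A : H →ₗ[ℂ] H) ≤ KS := by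
      rw [hKS, Submodule.map_span, Submodule.span_le]
      rintro _ ⟨_, ⟨k, rfl⟩, rfl⟩
      exact Submodule.subset_span ⟨k + 1, by simp [pow_succ']⟩
    exact this ⟨x, hx, rfl⟩
  -- A maps Kc into Kc
  have hAKc : ∀ x ∈ Kc, A x ∈ Kc := by
    intro x hx
    have hx' : x ∈ closure (KS : Set H) := hx
    have h1 : A x ∈ closure (A '' (KS : Set H)) :=
      (image_closure_subset_closure_image A.continuous) ⟨x, hx', rfl⟩
    have h2 : closure (A '' (KS : Set H)) ⊆ closure (KS : Set H) :=
      closure_mono (by rintro _ ⟨y, hy, rfl⟩; exact hAK y hy)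
    exact h2 h1
  -- orthogonal of KS equals orthogonal of Kc
  have hperp : KSᗮ = Kcᗮ := by
    rw [hKc, ← KS.orthogonal_orthogonal_eq_closure, Submodule.triorthogonal_eq_orthogonal]
  constructor
  · intro hf
    have hf' : B g ∈ Kc := hf
    -- B maps Kc into Kc
    have hBKc : ∀ x ∈ Kc, B x ∈ Kc := by
      intro x hx
      have hBKS : B '' (KS : Set H) ⊆ (Kc : Set H) := by
        have : KS ≤ Kc.comap (B : H →ₗ[ℂ] H) := by
          rw [hKS, Submodule.span_le]
          rintro _ ⟨k, rfl⟩
          cases k with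
          | zero => simpa using hf'
          | succ k =>
            have : B ((A ^ (k + 1)) g) = (A ^ k) g := by
              rw [pow_succ']
              exact hBA' ((A ^ k) g)
            refine Submodule.mem_comap.mpr ?_
            show B ((A ^ (k + 1)) g) ∈ Kc
            rw [this]
            exact KS.le_topologicalClosure (Submodule.subset_span ⟨k, rfl⟩)
        rintro _ ⟨y, hy, rfl⟩
        exact this hy
      have h1 : B x ∈ closure (B '' (KS : Set H)) :=
        (image_closure_subset_closure_image B.continuous) ⟨x, hx, rfl⟩
      have h2 : closure (B '' (KS : Set H)) ⊆ (Kc : Set H) :=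
        closure_minimal hBKS KS.isClosed_topologicalClosure
      exact h2 h1
    apply Set.Subset.antisymm
    · rintro x ⟨hx1, y, hy, rfl⟩
      have hy1 : y ∈ Kc := by
        have := hBKc _ hx1
        rwa [hBA'] at this
      have hy2 : y ∈ Kcᗮ := hperp ▸ hy
      have : (inner ℂ y y : ℂ) = 0 := hy2 y hy1
      have hy0 : y = 0 := inner_self_eq_zero.mp this
      simp [hy0]
    · rintro x rfl
      exact ⟨Kc.zero_mem, 0, KSᗮ.zero_mem, map_zero A⟩
  · intro hI
    haveI : CompleteSpace Kc := KS.isClosed_topologicalClosure.completeSpace_coe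
    set f : H := B g with hfdef
    set f₁ : H := (Kc.orthogonalProjectionOnto f : H) with hf1def
    have hf₁ : f₁ ∈ Kc := (Kc.orthogonalProjectionOnto f).2
    have hf₂ : f - f₁ ∈ Kcᗮ := by
      have := Kc.sub_starProjection_mem_orthogonal f
      rw [Submodule.starProjection_apply] at this
      exact this
    have hAf : A f = g := hAB' g
    have hAf₂Kc : A (f - f₁) ∈ Kc := by
      rw [map_sub, hAf]
      exact Kc.sub_mem (KS.le_topologicalClosure hginKS) (hAKc _ hf₁)
    have hmem : A (f - f₁) ∈ (Kc : Set H) ∩ (A '' (KSᗮ : Set H)) :=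
      ⟨hAf₂Kc, ⟨f - f₁, hperp ▸ hf₂, rfl⟩⟩
    rw [hI] at hmem
    have h0 : f - f₁ = 0 := by
      have := hBA' (f - f₁)
      rw [hmem, map_zero] at this
      exact this.symm
    have : f = f₁ := by rwa [sub_eq_zero] at h0
    rw [this]
    exact hf₁
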